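/- Let 𝓗 be a subset of the collection of all MCSes of an unsatisfiable finite knowledge base KB, and let h be a minimum-cardinality hitting set of 𝓗. If the subformula induced by h is unsatisfiable, then h is a smallest MUS (SMUS) of KB, i.e., h is a MUS and no MUS of KB has smaller cardinality. -/
import Mathlib


/-- An interpretation assigns Boolean values to propositional variables. -/
abbrev Interp := ℕ → Bool
/-- A formula is identified with its semantics: the set of interpretations satisfying it. -/
abbrev Form := Interp → Prop

/-- An interpretation satisfies a set of formulas (interpreted conjunctively). -/
def Satisfies (i : Interp) (S : Set Form) : Prop := ∀ f ∈ S, f i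
/-- A set of formulas is satisfiable. -/
def Sat (S : Set Form) : Prop := ∃ i, Satisfies i S
/-- Classical entailment: every model of S is a model of φ. -/
def Entails (S : Set Form) (φ : Form) : Prop := ∀ i, Satisfies i S → φ i
/-- Negation of a formula. -/
def FNeg (φ : Form) : Form := fun i => ¬ φ i
/-- Minimal unsatisfiable subset of KB. -/
def IsMUS (KB M : Set Form) : Prop := M ⊆ KB ∧ ¬ Sat M ∧ ∀ M' ⊂ M, Sat M'
/-- Minimal correction set of KB. -/
def IsMCS (KB C : Set Form) : Prop := C ⊆ KB ∧ Sat (KB \ C) ∧ ∀ C' ⊂ C, ¬ Sat (KB \ C')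
/-- H hits every member of Γ. -/
def HittingSet (Γ : Set (Set Form)) (H : Set Form) : Prop := ∀ S ∈ Γ, (H ∩ S).Nonempty
/-- Minimal hitting set (under inclusion). -/
def MinHittingSet (Γ : Set (Set Form)) (H : Set Form) : Prop :=
  HittingSet Γ H ∧ ∀ H' ⊂ H, ¬ HittingSet Γ H'
/-- ε is a support for φ from KB: inclusion-minimal subset of KB entailing φ. -/
def IsSupport (KB : Set Form) (φ : Form) (ε : Set Form) : Prop :=
  ε ⊆ KB ∧ Entails ε φ ∧ ∀ ε' ⊂ ε, ¬ Entails ε' φ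


lemma sat_mono {S T : Set Form} (hST : S ⊆ T) (h : Sat T) : Sat S := by
  obtain ⟨i, hi⟩ := h
  exact ⟨i, fun f hf => hi f (hST hf)⟩

lemma exists_mus : ∀ n (S : Set Form), S.ncard = n → S.Finite → ¬ Sat S →
    ∃ M ⊆ S, ¬ Sat M ∧ ∀ M' ⊂ M, Sat M' := by
  intro n
  induction n using Nat.strong_induction_on with
  | _ n ih =>
    intro S hn hfin hun
    by_cases hall : ∀ S' ⊂ S, Sat S'
    · exact ⟨S, subset_rfl, hun, hall⟩
    · push_neg at hall
      obtain ⟨S', hS', hun'⟩ := hall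
      obtain ⟨M, hM, h1, h2⟩ := ih S'.ncard (hn ▸ Set.ncard_lt_ncard hS' hfin) S' rfl
        (hfin.subset hS'.subset) hun'
      exact ⟨M, hM.trans hS'.subset, h1, h2⟩

lemma mus_hits {KB M : Set Form} (𝓗 : Set (Set Form)) (h𝓗 : 𝓗 ⊆ {C | IsMCS KB C})
    (hM : IsMUS KB M) : HittingSet 𝓗 M := by
  intro C hC
  obtain ⟨hCsub, hCsat, _⟩ := h𝓗 hC
  by_contra hempty
  rw [Set.not_nonempty_iff_eq_empty] at hempty
  apply hM.2.1
  apply sat_mono _ hCsat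
  intro f hf
  refine ⟨hM.1 hf, fun hfC => ?_⟩
  exact Set.eq_empty_iff_forall_notMem.mp hempty f ⟨hf, hfC⟩

/-- A minimum-cardinality hitting set of a subcollection of the MCSes of KB which is itself
unsatisfiable is a smallest MUS of KB. -/
theorem stmt8 (KB h : Set Form) (𝓗 : Set (Set Form)) (hfin : KB.Finite) (hunsat : ¬ Sat KB)
    (h𝓗 : 𝓗 ⊆ {C | IsMCS KB C}) (hsub : h ⊆ KB)
    (hhit : HittingSet 𝓗 h)
    (hmin : ∀ h' ⊆ KB, HittingSet 𝓗 h' → h.ncard ≤ h'.ncard)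
    (hhu : ¬ Sat h) :
    IsMUS KB h ∧ ∀ M, IsMUS KB M → h.ncard ≤ M.ncard := by
  have key : ∀ M, IsMUS KB M → h.ncard ≤ M.ncard := by
    intro M hM
    exact hmin M hM.1 (mus_hits 𝓗 h𝓗 hM)
  refine ⟨⟨hsub, hhu, ?_⟩, key⟩
  intro h' hh'
  by_contra hun'
  obtain ⟨M, hMh', hMu, hMmin⟩ := exists_mus h'.ncard h' rfl ((hfin.subset hsub).subset hh'.subset) hun'
  have hMUS : IsMUS KB M := ⟨(hMh'.trans hh'.subset).trans hsub, hMu, hMmin⟩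
  have h1 := key M hMUS
  have h2 : M.ncard < h.ncard :=
    lt_of_le_of_lt (Set.ncard_le_ncard hMh' (hfin.subset (hh'.subset.trans hsub)))
      (Set.ncard_lt_ncard hh' (hfin.subset hsub))
  omega
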